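/- Let p : ℝ³ → ℂ be a complex-valued homogeneous quadratic polynomial, p(x) = Σ_{1 ≤ i ≤ j ≤ 3} c_{ij} x_i x_j with c_{ij} ∈ ℂ. Then p is harmonic (Δp = 0) and horizontally conformal (κ(p,p) = 0 identically) if and only if there exists an isotropic vector v = (v₁,v₂,v₃) ∈ ℂ³, i.e. one with v₁² + v₂² + v₃² = 0, such that p(x) = (v₁x₁ + v₂x₂ + v₃x₃)² for all x ∈ ℝ³. In particular, the harmonic horizontally conformal quadratic polynomials on ℝ³ form a set parametrized by the two-dimensional complex variety of isotropic vectors in ℂ³. -/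

import Mathlib

/-- The partial derivative in direction `k` of a complex-valued function on `ℝᵐ`. -/
noncomputable def pd {m : ℕ} (k : Fin m) (f : (Fin m → ℝ) → ℂ) : (Fin m → ℝ) → ℂ :=
  fun x => fderiv ℝ f x (Pi.single k 1)

/-- The Euclidean Laplacian `Δf = ∑ₖ ∂²f/∂xₖ²`. -/
noncomputable def lap {m : ℕ} (f : (Fin m → ℝ) → ℂ) : (Fin m → ℝ) → ℂ :=
  fun x => ∑ k : Fin m, pd k (pd k f) x

/-- The conformality operator `κ(f,g) = ∑ₖ (∂f/∂xₖ)(∂g/∂xₖ)`. -/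
noncomputable def conf {m : ℕ} (f g : (Fin m → ℝ) → ℂ) : (Fin m → ℝ) → ℂ :=
  fun x => ∑ k : Fin m, pd k f x * pd k g x

lemma coord_hasFDerivAt (i : Fin 3) (x : Fin 3 → ℝ) :
    HasFDerivAt (fun y : Fin 3 → ℝ => ((y i : ℝ) : ℂ))
      (Complex.ofRealCLM.comp (ContinuousLinearMap.proj i)) x :=
  Complex.ofRealCLM.hasFDerivAt.comp x (hasFDerivAt_apply i x)

lemma pd_poly (a0 a1 a2 b01 b02 b12 d0 d1 d2 e : ℂ) (k : Fin 3) (x : Fin 3 → ℝ) :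
    pd k (fun y => a0 * ((y 0 : ℂ) * (y 0 : ℂ)) + a1 * ((y 1 : ℂ) * (y 1 : ℂ))
      + a2 * ((y 2 : ℂ) * (y 2 : ℂ)) + b01 * ((y 0 : ℂ) * (y 1 : ℂ))
      + b02 * ((y 0 : ℂ) * (y 2 : ℂ)) + b12 * ((y 1 : ℂ) * (y 2 : ℂ))
      + d0 * (y 0 : ℂ) + d1 * (y 1 : ℂ) + d2 * (y 2 : ℂ) + e) x
    = (2 * a0 * (x 0 : ℂ) + b01 * (x 1 : ℂ) + b02 * (x 2 : ℂ) + d0) * (((Pi.single k (1:ℝ) : Fin 3 → ℝ) 0 : ℝ) : ℂ)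
      + (2 * a1 * (x 1 : ℂ) + b01 * (x 0 : ℂ) + b12 * (x 2 : ℂ) + d1) * (((Pi.single k (1:ℝ) : Fin 3 → ℝ) 1 : ℝ) : ℂ)
      + (2 * a2 * (x 2 : ℂ) + b02 * (x 0 : ℂ) + b12 * (x 1 : ℂ) + d2) * (((Pi.single k (1:ℝ) : Fin 3 → ℝ) 2 : ℝ) : ℂ) := by
  have h0 := coord_hasFDerivAt 0 x
  have h1 := coord_hasFDerivAt 1 x
  have h2 := coord_hasFDerivAt 2 x
  have H := (((((((((((h0.mul h0).const_mul a0).add ((h1.mul h1).const_mul a1)).add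
      ((h2.mul h2).const_mul a2)).add ((h0.mul h1).const_mul b01)).add
      ((h0.mul h2).const_mul b02)).add ((h1.mul h2).const_mul b12)).add
      (h0.const_mul d0)).add (h1.const_mul d1)).add (h2.const_mul d2)).add
      (hasFDerivAt_const e x))
  rw [pd]
  erw [H.fderiv]
  simp [ContinuousLinearMap.smul_apply, Complex.real_smul]
  ring

section main
variable (c00 c01 c02 c11 c12 c22 : ℂ) (p : (Fin 3 → ℝ) → ℂ)
    (hp : ∀ x, p x = c00 * (x 0 : ℂ) ^ 2 + c11 * (x 1 : ℂ) ^ 2 + c22 * (x 2 : ℂ) ^ 2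
        + c01 * ((x 0 : ℂ) * (x 1 : ℂ)) + c02 * ((x 0 : ℂ) * (x 2 : ℂ))
        + c12 * ((x 1 : ℂ) * (x 2 : ℂ)))

include hp

lemma grad0 : pd 0 p = fun y => (0:ℂ) * ((y 0 : ℂ) * (y 0 : ℂ)) + 0 * ((y 1 : ℂ) * (y 1 : ℂ))
      + 0 * ((y 2 : ℂ) * (y 2 : ℂ)) + 0 * ((y 0 : ℂ) * (y 1 : ℂ))
      + 0 * ((y 0 : ℂ) * (y 2 : ℂ)) + 0 * ((y 1 : ℂ) * (y 2 : ℂ))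
      + (2*c00) * (y 0 : ℂ) + (c01) * (y 1 : ℂ) + (c02) * (y 2 : ℂ) + 0 := by
  have hp' : p = fun y => c00 * ((y 0 : ℂ) * (y 0 : ℂ)) + c11 * ((y 1 : ℂ) * (y 1 : ℂ))
      + c22 * ((y 2 : ℂ) * (y 2 : ℂ)) + c01 * ((y 0 : ℂ) * (y 1 : ℂ))
      + c02 * ((y 0 : ℂ) * (y 2 : ℂ)) + c12 * ((y 1 : ℂ) * (y 2 : ℂ))
      + 0 * (y 0 : ℂ) + 0 * (y 1 : ℂ) + 0 * (y 2 : ℂ) + 0 := by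
    funext y; rw [hp y]; ring
  funext x
  rw [hp', pd_poly]
  simp [Pi.single_apply]
  all_goals ring

lemma grad1 : pd 1 p = fun y => (0:ℂ) * ((y 0 : ℂ) * (y 0 : ℂ)) + 0 * ((y 1 : ℂ) * (y 1 : ℂ))
      + 0 * ((y 2 : ℂ) * (y 2 : ℂ)) + 0 * ((y 0 : ℂ) * (y 1 : ℂ))
      + 0 * ((y 0 : ℂ) * (y 2 : ℂ)) + 0 * ((y 1 : ℂ) * (y 2 : ℂ))
      + (c01) * (y 0 : ℂ) + (2*c11) * (y 1 : ℂ) + (c12) * (y 2 : ℂ) + 0 := by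
  have hp' : p = fun y => c00 * ((y 0 : ℂ) * (y 0 : ℂ)) + c11 * ((y 1 : ℂ) * (y 1 : ℂ))
      + c22 * ((y 2 : ℂ) * (y 2 : ℂ)) + c01 * ((y 0 : ℂ) * (y 1 : ℂ))
      + c02 * ((y 0 : ℂ) * (y 2 : ℂ)) + c12 * ((y 1 : ℂ) * (y 2 : ℂ))
      + 0 * (y 0 : ℂ) + 0 * (y 1 : ℂ) + 0 * (y 2 : ℂ) + 0 := by
    funext y; rw [hp y]; ring
  funext x
  rw [hp', pd_poly]
  simp [Pi.single_apply]
  all_goals ring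

lemma grad2 : pd 2 p = fun y => (0:ℂ) * ((y 0 : ℂ) * (y 0 : ℂ)) + 0 * ((y 1 : ℂ) * (y 1 : ℂ))
      + 0 * ((y 2 : ℂ) * (y 2 : ℂ)) + 0 * ((y 0 : ℂ) * (y 1 : ℂ))
      + 0 * ((y 0 : ℂ) * (y 2 : ℂ)) + 0 * ((y 1 : ℂ) * (y 2 : ℂ))
      + (c02) * (y 0 : ℂ) + (c12) * (y 1 : ℂ) + (2*c22) * (y 2 : ℂ) + 0 := by
  have hp' : p = fun y => c00 * ((y 0 : ℂ) * (y 0 : ℂ)) + c11 * ((y 1 : ℂ) * (y 1 : ℂ))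
      + c22 * ((y 2 : ℂ) * (y 2 : ℂ)) + c01 * ((y 0 : ℂ) * (y 1 : ℂ))
      + c02 * ((y 0 : ℂ) * (y 2 : ℂ)) + c12 * ((y 1 : ℂ) * (y 2 : ℂ))
      + 0 * (y 0 : ℂ) + 0 * (y 1 : ℂ) + 0 * (y 2 : ℂ) + 0 := by
    funext y; rw [hp y]; ring
  funext x
  rw [hp', pd_poly]
  simp [Pi.single_apply]
  all_goals ring


lemma lapval : ∀ x, lap p x = 2*c00 + 2*c11 + 2*c22 := by
  intro x
  have g0 := grad0 c00 c01 c02 c11 c12 c22 p hp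
  have g1 := grad1 c00 c01 c02 c11 c12 c22 p hp
  have g2 := grad2 c00 c01 c02 c11 c12 c22 p hp
  simp only [lap, Fin.sum_univ_three, g0, g1, g2, pd_poly]
  simp [Pi.single_apply]
  all_goals ring

lemma confval : ∀ x, conf p p x =
    (2*c00*(x 0:ℂ) + c01*(x 1:ℂ) + c02*(x 2:ℂ))^2
    + (2*c11*(x 1:ℂ) + c01*(x 0:ℂ) + c12*(x 2:ℂ))^2
    + (2*c22*(x 2:ℂ) + c02*(x 0:ℂ) + c12*(x 1:ℂ))^2 := by
  intro x
  have g0 := grad0 c00 c01 c02 c11 c12 c22 p hp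
  have g1 := grad1 c00 c01 c02 c11 c12 c22 p hp
  have g2 := grad2 c00 c01 c02 c11 c12 c22 p hp
  simp only [conf, Fin.sum_univ_three, g0, g1, g2]
  ring

end main

theorem stmt3 (c00 c01 c02 c11 c12 c22 : ℂ)
    (p : (Fin 3 → ℝ) → ℂ)
    (hp : ∀ x, p x = c00 * (x 0 : ℂ) ^ 2 + c11 * (x 1 : ℂ) ^ 2 + c22 * (x 2 : ℂ) ^ 2
        + c01 * ((x 0 : ℂ) * (x 1 : ℂ)) + c02 * ((x 0 : ℂ) * (x 2 : ℂ))
        + c12 * ((x 1 : ℂ) * (x 2 : ℂ))) :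
    ((∀ x, lap p x = 0) ∧ (∀ x, conf p p x = 0)) ↔
      ∃ v : Fin 3 → ℂ, v 0 ^ 2 + v 1 ^ 2 + v 2 ^ 2 = 0 ∧
        ∀ x : Fin 3 → ℝ, p x = (v 0 * (x 0 : ℂ) + v 1 * (x 1 : ℂ) + v 2 * (x 2 : ℂ)) ^ 2 := by
  have hL := lapval c00 c01 c02 c11 c12 c22 p hp
  have hC := confval c00 c01 c02 c11 c12 c22 p hp
  constructor
  · rintro ⟨hlap, hconf⟩
    have E0 : c00 + c11 + c22 = 0 := by
      have h := (hL 0).symm.trans (hlap 0); linear_combination h / 2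
    have mkr : ∀ x : Fin 3 → ℝ,
        (2*c00*(x 0:ℂ) + c01*(x 1:ℂ) + c02*(x 2:ℂ))^2
        + (2*c11*(x 1:ℂ) + c01*(x 0:ℂ) + c12*(x 2:ℂ))^2
        + (2*c22*(x 2:ℂ) + c02*(x 0:ℂ) + c12*(x 1:ℂ))^2 = 0 :=
      fun x => (hC x).symm.trans (hconf x)
    have r1 : (2*c00 : ℂ)^2 + c01^2 + c02^2 = 0 := by
      have h := mkr ![1,0,0]; norm_num [Matrix.cons_val_two] at h; linear_combination h
    have r2 : (c01 : ℂ)^2 + (2*c11)^2 + c12^2 = 0 := by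
      have h := mkr ![0,1,0]; norm_num [Matrix.cons_val_two] at h; linear_combination h
    have r3 : (c02 : ℂ)^2 + c12^2 + (2*c22)^2 = 0 := by
      have h := mkr ![0,0,1]; norm_num [Matrix.cons_val_two] at h; linear_combination h
    have r4 : (2*c00+c01 : ℂ)^2 + (c01+2*c11)^2 + (c02+c12)^2 = 0 := by
      have h := mkr ![1,1,0]; norm_num [Matrix.cons_val_two] at h; linear_combination h
    have r5 : (2*c00+c02 : ℂ)^2 + (c01+c12)^2 + (c02+2*c22)^2 = 0 := by
      have h := mkr ![1,0,1]; norm_num [Matrix.cons_val_two] at h; linear_combination h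
    have r6 : (c01+c02 : ℂ)^2 + (2*c11+c12)^2 + (c12+2*c22)^2 = 0 := by
      have h := mkr ![0,1,1]; norm_num [Matrix.cons_val_two] at h; linear_combination h
    have hd : c01^2 = 4*c00*c11 := by
      linear_combination (1/2 : ℂ)*r1 + (1/2 : ℂ)*r2 - (1/2 : ℂ)*r3
        + 2*(c22-c00-c11)*E0
    have he : c02^2 = 4*c00*c22 := by
      linear_combination (1/2 : ℂ)*r1 - (1/2 : ℂ)*r2 + (1/2 : ℂ)*r3
        + 2*(c11-c00-c22)*E0
    have hf : c12^2 = 4*c11*c22 := by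
      linear_combination (-1/2 : ℂ)*r1 + (1/2 : ℂ)*r2 + (1/2 : ℂ)*r3
        + 2*(c00-c11-c22)*E0
    have hde : c01*c02 = 2*c00*c12 := by
      linear_combination (1/2 : ℂ)*r6 - (1/2 : ℂ)*r2 - (1/2 : ℂ)*r3 - 2*c12*E0
    have hdf : c01*c12 = 2*c11*c02 := by
      linear_combination (1/2 : ℂ)*r5 - (1/2 : ℂ)*r1 - (1/2 : ℂ)*r3 - 2*c02*E0
    by_cases ha : c00 = 0
    · by_cases hb : c11 = 0
      · -- degenerate case: everything is zero
        have hc : c22 = 0 := by linear_combination E0 - ha - hb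
        have hd0 : c01 = 0 := by
          have : c01^2 = 0 := by rw [hd, ha]; ring
          exact pow_eq_zero_iff two_ne_zero |>.mp this
        have he0 : c02 = 0 := by
          have : c02^2 = 0 := by rw [he, ha]; ring
          exact pow_eq_zero_iff two_ne_zero |>.mp this
        have hf0 : c12 = 0 := by
          have : c12^2 = 0 := by rw [hf, hb]; ring
          exact pow_eq_zero_iff two_ne_zero |>.mp this
        refine ⟨![0,0,0], by norm_num [Matrix.cons_val_two], fun x => ?_⟩
        rw [hp x, ha, hb, hc, hd0, he0, hf0]; norm_num [Matrix.cons_val_two]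
      · -- c11 ≠ 0
        obtain ⟨w, hw⟩ := IsAlgClosed.exists_pow_nat_eq c11 zero_lt_two
        have hw0 : w ≠ 0 := fun h => hb (by rw [← hw, h]; ring)
        have F1 : c11 = w^2 := hw.symm
        have F0 : c00 = (c01/(2*w))^2 := by
          field_simp
          linear_combination 4*c00*hw - hd
        have F2 : c22 = (c12/(2*w))^2 := by
          field_simp
          linear_combination 4*c22*hw - hf
        have F4 : c01 = 2*(c01/(2*w))*w := by field_simp
        have F5 : c12 = 2*w*(c12/(2*w)) := by field_simp
        have F3 : c02 = 2*(c01/(2*w))*(c12/(2*w)) := by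
          field_simp
          linear_combination 2*c02*hw - hdf
        refine ⟨![c01/(2*w), w, c12/(2*w)], ?_, fun x => ?_⟩
        · show (c01/(2*w))^2 + w^2 + (c12/(2*w))^2 = 0
          linear_combination E0 - F0 - F1 - F2
        · show p x = ((c01/(2*w)) * (x 0:ℂ) + w * (x 1:ℂ) + (c12/(2*w)) * (x 2:ℂ))^2
          rw [hp x]
          linear_combination ((x 0:ℂ)^2)*F0 + ((x 1:ℂ)^2)*F1 + ((x 2:ℂ)^2)*F2
            + ((x 0:ℂ)*(x 1:ℂ))*F4 + ((x 1:ℂ)*(x 2:ℂ))*F5 + ((x 0:ℂ)*(x 2:ℂ))*F3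
    · -- c00 ≠ 0
      obtain ⟨w, hw⟩ := IsAlgClosed.exists_pow_nat_eq c00 zero_lt_two
      have hw0 : w ≠ 0 := fun h => ha (by rw [← hw, h]; ring)
      have G0 : c00 = w^2 := hw.symm
      have G1 : c11 = (c01/(2*w))^2 := by
        field_simp
        linear_combination 4*c11*hw - hd
      have G2 : c22 = (c02/(2*w))^2 := by
        field_simp
        linear_combination 4*c22*hw - he
      have G01 : c01 = 2*w*(c01/(2*w)) := by field_simp
      have G02 : c02 = 2*w*(c02/(2*w)) := by field_simp
      have G12 : c12 = 2*(c01/(2*w))*(c02/(2*w)) := by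
        field_simp
        linear_combination 2*c12*hw - hde
      refine ⟨![w, c01/(2*w), c02/(2*w)], ?_, fun x => ?_⟩
      · show w^2 + (c01/(2*w))^2 + (c02/(2*w))^2 = 0
        linear_combination E0 - G0 - G1 - G2
      · show p x = (w * (x 0:ℂ) + (c01/(2*w)) * (x 1:ℂ) + (c02/(2*w)) * (x 2:ℂ))^2
        rw [hp x]
        linear_combination ((x 0:ℂ)^2)*G0 + ((x 1:ℂ)^2)*G1 + ((x 2:ℂ)^2)*G2
          + ((x 0:ℂ)*(x 1:ℂ))*G01 + ((x 0:ℂ)*(x 2:ℂ))*G02 + ((x 1:ℂ)*(x 2:ℂ))*G12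
  · rintro ⟨v, hv, hpv⟩
    have key : ∀ x : Fin 3 → ℝ,
        c00 * (x 0 : ℂ) ^ 2 + c11 * (x 1 : ℂ) ^ 2 + c22 * (x 2 : ℂ) ^ 2
        + c01 * ((x 0 : ℂ) * (x 1 : ℂ)) + c02 * ((x 0 : ℂ) * (x 2 : ℂ))
        + c12 * ((x 1 : ℂ) * (x 2 : ℂ))
        = (v 0 * (x 0 : ℂ) + v 1 * (x 1 : ℂ) + v 2 * (x 2 : ℂ)) ^ 2 :=
      fun x => (hp x).symm.trans (hpv x)
    have k1 := key ![1,0,0]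
    have k2 := key ![0,1,0]
    have k3 := key ![0,0,1]
    have k4 := key ![1,1,0]
    have k5 := key ![1,0,1]
    have k6 := key ![0,1,1]
    norm_num [Matrix.cons_val_two] at k1 k2 k3 k4 k5 k6
    have ha : c00 = v 0^2 := by linear_combination k1
    have hb : c11 = v 1^2 := by linear_combination k2
    have hc : c22 = v 2^2 := by linear_combination k3
    have hab : c01 = 2*v 0*v 1 := by linear_combination k4 - k1 - k2
    have hac : c02 = 2*v 0*v 2 := by linear_combination k5 - k1 - k3
    have hbc : c12 = 2*v 1*v 2 := by linear_combination k6 - k2 - k3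
    subst ha hb hc hab hac hbc
    constructor
    · intro x
      rw [hL x]
      linear_combination 2*hv
    · intro x
      rw [hC x]
      linear_combination (4*(v 0 * (x 0:ℂ) + v 1 * (x 1:ℂ) + v 2 * (x 2:ℂ))^2) * hv
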